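/- Let (p1^k)_{k≥1} and (p2^k)_{k≥1} be consistent families of probability distributions on A^k, and let K^k denote the minimal Kantorovich cost between p1^k and p2^k with the Cantor ground distance. Then the sequence (K^k) is nondecreasing and bounded above by 1, hence convergent; its limit CK satisfies, for every k ≥ 1, 0 ≤ CK − K^k ≤ 2^{1−k} S_k, where S_k = Σ_{w∈A^k} min{p1^k(w), p2^k(w)}. -/
import Mathlib


/-- The length of the longest common prefix of two words `w1 w2 : Fin k → A`. -/
def lcpLen {A : Type*} [DecidableEq A] {k : ℕ} (w1 w2 : Fin k → A) : ℕ :=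
  (Finset.filter (fun i : Fin k => ∀ j, j ≤ i → w1 j = w2 j) Finset.univ).card

/-- The Cantor distance on words of length `k`. -/
noncomputable def cantor {A : Type*} [DecidableEq A] {k : ℕ} (w1 w2 : Fin k → A) : ℝ :=
  if w1 = w2 then 0 else (2 : ℝ) ^ (-(lcpLen w1 w2 : ℤ))

/-- `p` is a probability distribution on the finite set `X`. -/
def IsProbDist {X : Type*} [Fintype X] (p : X → ℝ) : Prop :=
  (∀ x, 0 ≤ p x) ∧ ∑ x, p x = 1

/-- `π` is a coupling of `p1` and `p2`. -/
def IsCoupling {X : Type*} [Fintype X] (p1 p2 : X → ℝ) (π : X → X → ℝ) : Prop :=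
  (∀ x y, 0 ≤ π x y) ∧ (∀ x, ∑ y, π x y = p1 x) ∧ (∀ y, ∑ x, π x y = p2 y)

/-- The Kantorovich (optimal transport) cost between `p1` and `p2` with ground cost `D`. -/
noncomputable def kant {X : Type*} [Fintype X] (D : X → X → ℝ) (p1 p2 : X → ℝ) : ℝ :=
  sInf {c : ℝ | ∃ π : X → X → ℝ, IsCoupling p1 p2 π ∧ c = ∑ x, ∑ y, D x y * π x y}

/-- `π` is an optimal coupling of `p1` and `p2` for the ground cost `D`. -/
def IsOptimalCoupling {X : Type*} [Fintype X] (D : X → X → ℝ) (p1 p2 : X → ℝ)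
    (π : X → X → ℝ) : Prop :=
  IsCoupling p1 p2 π ∧ ∀ π' : X → X → ℝ, IsCoupling p1 p2 π' →
    ∑ x, ∑ y, D x y * π x y ≤ ∑ x, ∑ y, D x y * π' x y

/-- `K^k`: the minimal Kantorovich cost between `p k` and `q k` with Cantor ground distance. -/
noncomputable def Kseq {A : Type*} [Fintype A] [DecidableEq A]
    (p q : ∀ k : ℕ, (Fin k → A) → ℝ) (k : ℕ) : ℝ :=
  kant cantor (p k) (q k)

/-- `S_k = Σ_{w ∈ A^k} min{p^k(w), q^k(w)}`. -/
noncomputable def Sseq {A : Type*} [Fintype A] [DecidableEq A]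
    (p q : ∀ k : ℕ, (Fin k → A) → ℝ) (k : ℕ) : ℝ :=
  ∑ w : Fin k → A, min (p k w) (q k w)

/-- The sequence `K^k` is nondecreasing, bounded above by 1, hence convergent, and its limit
`CK` satisfies `0 ≤ CK − K^k ≤ 2^{1−k} S_k` for all `k ≥ 1`. -/
theorem cantor_kantorovich_convergence {A : Type*} [Fintype A] [DecidableEq A]
    (p q : ∀ k : ℕ, (Fin k → A) → ℝ)
    (hp : ∀ k, IsProbDist (p k)) (hq : ∀ k, IsProbDist (q k))
    (hpc : ∀ k (w : Fin k → A), p k w = ∑ a : A, p (k + 1) (Fin.snoc w a))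
    (hqc : ∀ k (w : Fin k → A), q k w = ∑ a : A, q (k + 1) (Fin.snoc w a))
    (hrec : ∀ k : ℕ, 1 ≤ k →
      Kseq p q (k + 1) = Kseq p q k + (2 : ℝ) ^ (-(k : ℤ)) * (Sseq p q k - Sseq p q (k + 1)))
    (hK1 : Kseq p q 1 = 1 - Sseq p q 1) :
    (∀ k : ℕ, 1 ≤ k → Kseq p q k ≤ Kseq p q (k + 1)) ∧
    (∀ k : ℕ, 1 ≤ k → Kseq p q k ≤ 1) ∧
    ∃ CK : ℝ, Filter.Tendsto (Kseq p q) Filter.atTop (nhds CK) ∧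
      ∀ k : ℕ, 1 ≤ k →
        0 ≤ CK - Kseq p q k ∧
        CK - Kseq p q k ≤ (2 : ℝ) ^ (1 - (k : ℤ)) * Sseq p q k := by
  set a := Kseq p q with ha
  set s := Sseq p q with hs
  -- S nonneg
  have hs0 : ∀ k, 0 ≤ s k := by
    intro k
    apply Finset.sum_nonneg
    intro w _
    exact le_min ((hp k).1 w) ((hq k).1 w)
  -- S ≤ 1
  have hs1 : ∀ k, s k ≤ 1 := by
    intro k
    calc s k ≤ ∑ w : Fin k → A, p k w :=
          Finset.sum_le_sum fun w _ => min_le_left _ _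
      _ = 1 := (hp k).2
  -- S nonincreasing
  have hsle : ∀ k, s (k + 1) ≤ s k := by
    intro k
    have he : s (k + 1) = ∑ w : Fin k → A, ∑ x : A,
        min (p (k+1) (Fin.snoc w x)) (q (k+1) (Fin.snoc w x)) := by
      rw [hs]
      unfold Sseq
      rw [← Equiv.sum_comp (Fin.snocEquiv (fun _ => A)), Fintype.sum_prod_type,
        Finset.sum_comm]
      simp [Fin.snocEquiv]
    rw [he]
    apply Finset.sum_le_sum
    intro w _
    apply le_min
    · rw [hpc k w]
      exact Finset.sum_le_sum fun x _ => min_le_left _ _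
    · rw [hqc k w]
      exact Finset.sum_le_sum fun x _ => min_le_right _ _
  -- K nondecreasing (from index 1)
  have hmono : ∀ k : ℕ, 1 ≤ k → a k ≤ a (k + 1) := by
    intro k hk
    rw [hrec k hk]
    have h1 : (0:ℝ) ≤ (2 : ℝ) ^ (-(k : ℤ)) := by positivity
    nlinarith [hsle k]
  -- monotone chain from 1
  have hamono : ∀ i j : ℕ, 1 ≤ i → i ≤ j → a i ≤ a j := by
    intro i j hi hij
    induction j with
    | zero => omega
    | succ n ih =>
      rcases Nat.lt_or_ge i (n+1) with h | h
      · exact le_trans (ih (by omega)) (hmono n (by omega))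
      · have : i = n + 1 := by omega
        rw [this]
  -- the auxiliary sequence t
  set t : ℕ → ℝ := fun k => a k + (2 : ℝ) ^ (1 - (k : ℤ)) * s k with ht
  have hpow : ∀ k : ℕ, (2 : ℝ) ^ (1 - (k : ℤ)) = 2 * (2:ℝ) ^ (-(k : ℤ)) := by
    intro k
    rw [sub_eq_add_neg, zpow_add₀ (by norm_num : (2:ℝ) ≠ 0), zpow_one]
  have htstep : ∀ k : ℕ, 1 ≤ k → t (k + 1) = t k - (2:ℝ) ^ (-(k:ℤ)) * s k := by
    intro k hk
    have hc : (1 - ((k:ℕ)+1 : ℤ)) = -(k:ℤ) := by push_cast; ring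
    simp only [ht]
    rw [hrec k hk]
    push_cast
    rw [hc, hpow k]
    ring
  have htmono : ∀ i j : ℕ, 1 ≤ i → i ≤ j → t j ≤ t i := by
    intro i j hi hij
    induction j with
    | zero => omega
    | succ n ih =>
      rcases Nat.lt_or_ge i (n+1) with h | h
      · have h2 : t (n+1) ≤ t n := by
          rw [htstep n (by omega)]
          have h1 : (0:ℝ) ≤ (2 : ℝ) ^ (-(n : ℤ)) := by positivity
          nlinarith [hs0 n]
        exact le_trans h2 (ih (by omega))
      · have : i = n + 1 := by omega
        rw [this]
  have haT : ∀ k, a k ≤ t k := by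
    intro k
    have h1 : (0:ℝ) ≤ (2 : ℝ) ^ (1 - (k : ℤ)) := by positivity
    show a k ≤ a k + (2 : ℝ) ^ (1 - (k : ℤ)) * s k
    nlinarith [hs0 k]
  have ht1 : t 1 = 1 := by
    show a 1 + (2 : ℝ) ^ (1 - ((1:ℕ) : ℤ)) * s 1 = 1
    rw [hK1]
    norm_num
  have hbd : ∀ k : ℕ, 1 ≤ k → a k ≤ 1 := by
    intro k hk
    calc a k ≤ t k := haT k
      _ ≤ t 1 := htmono 1 k le_rfl hk
      _ = 1 := ht1
  refine ⟨hmono, hbd, ?_⟩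
  -- the shifted sequence
  set g : ℕ → ℝ := fun m => a (m + 1) with hg
  have hgmono : Monotone g := monotone_nat_of_le_succ fun n => hmono (n + 1) (by omega)
  have hgbd : BddAbove (Set.range g) := by
    refine ⟨1, ?_⟩
    rintro x ⟨m, rfl⟩
    exact hbd (m + 1) (by omega)
  set CK := ⨆ m, g m with hCK
  have hgt : Filter.Tendsto g Filter.atTop (nhds CK) :=
    tendsto_atTop_ciSup hgmono hgbd
  have hat : Filter.Tendsto a Filter.atTop (nhds CK) :=
    (Filter.tendsto_add_atTop_iff_nat 1).mp hgt
  refine ⟨CK, hat, ?_⟩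
  intro k hk
  have hk' : k - 1 + 1 = k := by omega
  have hle : a k ≤ CK := by
    have := le_ciSup hgbd (k - 1)
    simpa only [hg, hk'] using this
  have hub : CK ≤ t k := by
    apply ciSup_le
    intro m
    rcases Nat.lt_or_ge (m + 1) k with h | h
    · exact le_trans (hamono (m+1) k (by omega) (by omega)) (haT k)
    · exact le_trans (haT (m+1)) (htmono k (m+1) hk h)
  constructor
  · linarith
  · have : t k = a k + (2 : ℝ) ^ (1 - (k : ℤ)) * s k := rfl
    linarith [hub]
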